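/- Associativity of Int(Rel) composition: for all Int(Rel) morphisms R : (A⁺,A⁻)→(B⁺,B⁻), S : (B⁺,B⁻)→(C⁺,C⁻), and T : (C⁺,C⁻)→(D⁺,D⁻), one has T∘(S∘R) = (T∘S)∘R, where ∘ is the Int(Rel) composition given by the star formula. -/

import Mathlib

namespace IntRel

/-- A relation from `α` to `β`. -/
abbrev Rel' (α β : Type) : Type := α → β → Prop

/-- Right-to-left composition of relations: `(rcomp S R) a c` iff `∃ b, R a b ∧ S b c`. -/
def rcomp {α β γ : Type} (S : Rel' β γ) (R : Rel' α β) : Rel' α γ :=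
  fun a c => ∃ b, R a b ∧ S b c

/-- Reflexive–transitive closure of an endorelation. -/
def rstar {α : Type} (h : Rel' α α) : Rel' α α := Relation.ReflTransGen h

/-- Image `R[X]` of a subset under a relation. -/
def img {α β : Type} (R : Rel' α β) (X : Set α) : Set β := {b | ∃ a ∈ X, R a b}

/-- Preimage `[Y]R` of a subset under a relation. -/
def pre {α β : Type} (R : Rel' α β) (Y : Set β) : Set α := {a | ∃ b ∈ Y, R a b}

/-- Identity relation. -/
def idRel (α : Type) : Rel' α α := fun a b => a = b

/-- Empty relation. -/
def emptyRel (α β : Type) : Rel' α β := fun _ _ => False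

/-- Disjoint union of relations, acting componentwise. -/
def sumRel {α β γ δ : Type} (f : Rel' α γ) (g : Rel' β δ) : Rel' (α ⊕ β) (γ ⊕ δ) :=
  fun x y =>
    match x, y with
    | .inl a, .inl c => f a c
    | .inr b, .inr d => g b d
    | _, _ => False

/-- Disjoint union of subsets. -/
def sumSet {α β : Type} (X : Set α) (Y : Set β) : Set (α ⊕ β) :=
  fun z => match z with
    | .inl a => a ∈ X
    | .inr b => b ∈ Y

variable {Ap Am Bp Bm Cp Cm Dp Dm : Type}

/-- Component `R₁₂ : A⁺ → B⁺` of an Int(Rel) morphism. -/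
def c12 (R : Rel' (Ap ⊕ Bm) (Bp ⊕ Am)) : Rel' Ap Bp := fun a b => R (.inl a) (.inl b)
/-- Component `R₁₁ : A⁺ → A⁻` of an Int(Rel) morphism. -/
def c11 (R : Rel' (Ap ⊕ Bm) (Bp ⊕ Am)) : Rel' Ap Am := fun a a' => R (.inl a) (.inr a')
/-- Component `R₂₂ : B⁻ → B⁺` of an Int(Rel) morphism. -/
def c22 (R : Rel' (Ap ⊕ Bm) (Bp ⊕ Am)) : Rel' Bm Bp := fun b' b => R (.inr b') (.inl b)
/-- Component `R₂₁ : B⁻ → A⁻` of an Int(Rel) morphism. -/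
def c21 (R : Rel' (Ap ⊕ Bm) (Bp ⊕ Am)) : Rel' Bm Am := fun b' a' => R (.inr b') (.inr a')

/-- Composition in Int(Rel), given by the star (execution) formula. -/
def IntComp (S : Rel' (Bp ⊕ Cm) (Cp ⊕ Bm)) (R : Rel' (Ap ⊕ Bm) (Bp ⊕ Am)) :
    Rel' (Ap ⊕ Cm) (Cp ⊕ Am) :=
  fun x y =>
    match x, y with
    | .inl a, .inl c =>
        rcomp (c12 S) (rcomp (rstar (rcomp (c22 R) (c11 S))) (c12 R)) a c
    | .inl a, .inr a' =>
        c11 R a a' ∨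
          rcomp (c21 R) (rcomp (c11 S) (rcomp (rstar (rcomp (c22 R) (c11 S))) (c12 R))) a a'
    | .inr c', .inl c =>
        c22 S c' c ∨
          rcomp (c12 S) (rcomp (c22 R) (rcomp (rstar (rcomp (c11 S) (c22 R))) (c21 S))) c' c
    | .inr c', .inr a' =>
        rcomp (c21 R) (rcomp (rstar (rcomp (c11 S) (c22 R))) (c21 S)) c' a'

/-- The identity Int(Rel) morphism on `(A⁺, A⁻)`. -/
def IdInt (Ap Am : Type) : Rel' (Ap ⊕ Am) (Ap ⊕ Am) :=
  fun x y =>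
    match x, y with
    | .inl a, .inl a2 => a = a2
    | .inr a', .inr a2 => a' = a2
    | _, _ => False

/-- `R` is a positive map between the indicated multipointed objects. -/
def IsPos (R : Rel' (Ap ⊕ Bm) (Bp ⊕ Am)) (mAp : Set Ap) (mAm : Set Am)
    (mBp : Set Bp) (mBm : Set Bm) : Prop :=
  pre (c12 R) mBp = mAp ∧ img (c21 R) mBm = mAm ∧
    pre (c22 R) mBp = ∅ ∧ img (c22 R) mBm = ∅

/-- `R` is a negative map between the indicated multipointed objects. -/
def IsNeg (R : Rel' (Ap ⊕ Bm) (Bp ⊕ Am)) (mAp : Set Ap) (mAm : Set Am)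
    (mBp : Set Bp) (mBm : Set Bm) : Prop :=
  img (c12 R) mAp = mBp ∧ pre (c21 R) mAm = mBm ∧
    pre (c11 R) mAm = ∅ ∧ img (c11 R) mAp = ∅


/-! ### Auxiliary machinery for associativity -/

section Generic

variable {α β σ τ : Type}

theorem rstar_congr {h h' : Rel' α α} (he : ∀ x y, h x y ↔ h' x y) {x y : α} :
    rstar h x y ↔ rstar h' x y :=
  ⟨fun hx => Relation.ReflTransGen.lift id (fun a b hab => (he a b).1 hab) _ _ hx,
   fun hx => Relation.ReflTransGen.lift id (fun a b hab => (he a b).2 hab) _ _ hx⟩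

/-- A zigzag relation on a disjoint union. -/
def zig (p : Rel' α β) (q : Rel' β α) : Rel' (α ⊕ β) (α ⊕ β) :=
  fun x y => match x, y with
  | .inl a, .inr b => p a b
  | .inr b, .inl a => q b a
  | _, _ => False

/-- Goal of the zigzag decomposition lemma. -/
def zigGoal (p : Rel' α β) (q : Rel' β α) : (α ⊕ β) → (α ⊕ β) → Prop
  | .inl a, .inl a₂ => rstar (rcomp q p) a a₂
  | .inl a, .inr b => ∃ a₂, rstar (rcomp q p) a a₂ ∧ p a₂ b
  | .inr b, .inl a => ∃ a₂, q b a₂ ∧ rstar (rcomp q p) a₂ a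
  | .inr b, .inr b₂ => b = b₂ ∨ ∃ a a₂, q b a ∧ rstar (rcomp q p) a a₂ ∧ p a₂ b₂

theorem zig_decomp {p : Rel' α β} {q : Rel' β α} {x z : α ⊕ β}
    (h : rstar (zig p q) x z) : zigGoal p q x z := by
  induction h using Relation.ReflTransGen.head_induction_on with
  | refl =>
    cases z with
    | inl a => exact Relation.ReflTransGen.refl
    | inr b => exact Or.inl rfl
  | head hstep htail ih =>
    rename_i x' x''
    cases x' with
    | inl a =>
      cases x'' with
      | inl a' => exact hstep.elim
      | inr b =>
        cases z with
        | inl a₂ =>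
          obtain ⟨a', hq, hs⟩ := ih
          exact Relation.ReflTransGen.head ⟨b, hstep, hq⟩ hs
        | inr b₂ =>
          rcases ih with rfl | ⟨a', a₂, hq, hs, hp⟩
          · exact ⟨a, Relation.ReflTransGen.refl, hstep⟩
          · exact ⟨a₂, Relation.ReflTransGen.head ⟨b, hstep, hq⟩ hs, hp⟩
    | inr b =>
      cases x'' with
      | inr b' => exact hstep.elim
      | inl a =>
        cases z with
        | inl a₂ => exact ⟨a, hstep, ih⟩
        | inr b₂ =>
          obtain ⟨a₂, hs, hp⟩ := ih
          exact Or.inr ⟨a, a₂, hstep, hs, hp⟩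

theorem zig_build {p : Rel' α β} {q : Rel' β α} {a a₂ : α}
    (h : rstar (rcomp q p) a a₂) : rstar (zig p q) (.inl a) (.inl a₂) := by
  induction h with
  | refl => exact Relation.ReflTransGen.refl
  | tail hab hbc ih =>
    obtain ⟨m, hp, hq⟩ := hbc
    exact Relation.ReflTransGen.tail
      (Relation.ReflTransGen.tail ih (show zig p q (.inl _) (.inr m) from hp))
      (show zig p q (.inr m) (.inl _) from hq)

theorem zig_ll {p : Rel' α β} {q : Rel' β α} {a a₂ : α} :
    rstar (zig p q) (.inl a) (.inl a₂) ↔ rstar (rcomp q p) a a₂ :=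
  ⟨fun h => zig_decomp h, zig_build⟩

theorem zig_lr {p : Rel' α β} {q : Rel' β α} {a : α} {b : β} :
    rstar (zig p q) (.inl a) (.inr b) ↔ ∃ a₂, rstar (rcomp q p) a a₂ ∧ p a₂ b :=
  ⟨fun h => zig_decomp h, fun ⟨a₂, hs, hp⟩ =>
    Relation.ReflTransGen.tail (zig_build hs) (show zig p q (.inl a₂) (.inr b) from hp)⟩

theorem zig_rl {p : Rel' α β} {q : Rel' β α} {b : β} {a : α} :
    rstar (zig p q) (.inr b) (.inl a) ↔ ∃ a₂, q b a₂ ∧ rstar (rcomp q p) a₂ a :=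
  ⟨fun h => zig_decomp h, fun ⟨a₂, hq, hs⟩ =>
    Relation.ReflTransGen.head (show zig p q (.inr b) (.inl a₂) from hq) (zig_build hs)⟩

/-- Swapping a relation on a disjoint union. -/
def swapRel (Wr : Rel' (σ ⊕ τ) (σ ⊕ τ)) : Rel' (τ ⊕ σ) (τ ⊕ σ) :=
  fun x y => Wr x.swap y.swap

theorem rstar_swapRel {Wr : Rel' (σ ⊕ τ) (σ ⊕ τ)} {x y : τ ⊕ σ} :
    rstar (swapRel Wr) x y ↔ rstar Wr x.swap y.swap := by
  constructor
  · intro h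
    exact Relation.ReflTransGen.lift Sum.swap (fun a b hab => hab) _ _ h
  · intro h
    have h2 := Relation.ReflTransGen.lift (p := swapRel Wr) Sum.swap
      (fun a b hab => show Wr a.swap.swap b.swap.swap by simpa using hab) _ _ h
    simpa [Function.onFun, rstar] using h2

theorem zig_swap_iff {p : Rel' α β} {q : Rel' β α} {x y : α ⊕ β} :
    zig p q x y ↔ zig q p x.swap y.swap := by
  cases x <;> cases y <;> exact Iff.rfl

theorem zig_rr {p : Rel' α β} {q : Rel' β α} {b b₂ : β} :
    rstar (zig p q) (.inr b) (.inr b₂) ↔ rstar (rcomp p q) b b₂ := by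
  have h1 : rstar (zig p q) (.inr b) (.inr b₂) ↔
      rstar (swapRel (zig q p)) (.inr b) (.inr b₂) :=
    rstar_congr (fun x y => zig_swap_iff)
  exact h1.trans (rstar_swapRel.trans zig_ll)

theorem zig_rl' {p : Rel' α β} {q : Rel' β α} {b : β} {a : α} :
    rstar (zig p q) (.inr b) (.inl a) ↔ ∃ b₂, rstar (rcomp p q) b b₂ ∧ q b₂ a := by
  have h1 : rstar (zig p q) (.inr b) (.inl a) ↔
      rstar (swapRel (zig q p)) (.inr b) (.inl a) :=
    rstar_congr (fun x y => zig_swap_iff)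
  exact h1.trans (rstar_swapRel.trans zig_lr)

theorem zig_lr' {p : Rel' α β} {q : Rel' β α} {a : α} {b : β} :
    rstar (zig p q) (.inl a) (.inr b) ↔ ∃ b₀, p a b₀ ∧ rstar (rcomp p q) b₀ b := by
  have h1 : rstar (zig p q) (.inl a) (.inr b) ↔
      rstar (swapRel (zig q p)) (.inl a) (.inr b) :=
    rstar_congr (fun x y => zig_swap_iff)
  exact h1.trans (rstar_swapRel.trans zig_rl)

end Generic
section Collapse

variable {σ τ : Type}

/-- Restriction of a relation on a disjoint union to the left summand. -/
def resl (Wr : Rel' (σ ⊕ τ) (σ ⊕ τ)) : Rel' σ σ := fun u v => Wr (.inl u) (.inl v)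

/-- Restriction of a relation on a disjoint union to the right summand. -/
def resr (Wr : Rel' (σ ⊕ τ) (σ ⊕ τ)) : Rel' τ τ := fun y y₂ => Wr (.inr y) (.inr y₂)

/-- Summary relation on the right summand: either a direct edge, or an excursion
through the left summand using only left-internal edges. -/
def summ (Wr : Rel' (σ ⊕ τ) (σ ⊕ τ)) : Rel' τ τ := fun y y₂ =>
  Wr (.inr y) (.inr y₂) ∨
    ∃ u v, Wr (.inr y) (.inl u) ∧ rstar (resl Wr) u v ∧ Wr (.inl v) (.inr y₂)

theorem resl_star_emb {Wr : Rel' (σ ⊕ τ) (σ ⊕ τ)} {u v : σ}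
    (h : rstar (resl Wr) u v) : rstar Wr (.inl u) (.inl v) :=
  Relation.ReflTransGen.lift Sum.inl (fun _ _ hab => hab) _ _ h

theorem resr_star_emb {Wr : Rel' (σ ⊕ τ) (σ ⊕ τ)} {u v : τ}
    (h : rstar (resr Wr) u v) : rstar Wr (.inr u) (.inr v) :=
  Relation.ReflTransGen.lift Sum.inr (fun _ _ hab => hab) _ _ h

theorem summ_star_emb {Wr : Rel' (σ ⊕ τ) (σ ⊕ τ)} {y y₂ : τ}
    (h : rstar (summ Wr) y y₂) : rstar Wr (.inr y) (.inr y₂) := by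
  induction h with
  | refl => exact Relation.ReflTransGen.refl
  | tail hab hbc ih =>
    rcases hbc with hd | ⟨u, v, h1, h2, h3⟩
    · exact Relation.ReflTransGen.tail ih hd
    · exact ih.trans (((Relation.ReflTransGen.single h1).trans
        (resl_star_emb h2)).tail h3)

/-- Goal of the collapse lemma with target in the right summand. -/
def cGoalR (Wr : Rel' (σ ⊕ τ) (σ ⊕ τ)) (y₂ : τ) : (σ ⊕ τ) → Prop
  | .inr y => rstar (summ Wr) y y₂
  | .inl u => ∃ v y₁, rstar (resl Wr) u v ∧ Wr (.inl v) (.inr y₁) ∧ rstar (summ Wr) y₁ y₂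

theorem collapse_to_inr {Wr : Rel' (σ ⊕ τ) (σ ⊕ τ)} {x : σ ⊕ τ} {y₂ : τ}
    (h : rstar Wr x (.inr y₂)) : cGoalR Wr y₂ x := by
  induction h using Relation.ReflTransGen.head_induction_on with
  | refl => exact Relation.ReflTransGen.refl
  | head hstep htail ih =>
    rename_i x' x''
    cases x' with
    | inl u =>
      cases x'' with
      | inl v =>
        obtain ⟨v', y₁, h1, h2, h3⟩ := ih
        exact ⟨v', y₁, Relation.ReflTransGen.head hstep h1, h2, h3⟩
      | inr y => exact ⟨u, y, Relation.ReflTransGen.refl, hstep, ih⟩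
    | inr y =>
      cases x'' with
      | inr y' => exact Relation.ReflTransGen.head (Or.inl hstep) ih
      | inl u =>
        obtain ⟨v, y₁, h1, h2, h3⟩ := ih
        exact Relation.ReflTransGen.head (Or.inr ⟨u, v, hstep, h1, h2⟩) h3

/-- Goal of the collapse lemma with target in the left summand. -/
def cGoalL (Wr : Rel' (σ ⊕ τ) (σ ⊕ τ)) (u₂ : σ) : (σ ⊕ τ) → Prop
  | .inl u => rstar (resl Wr) u u₂ ∨
      ∃ v y₁ y₂ u₁, rstar (resl Wr) u v ∧ Wr (.inl v) (.inr y₁) ∧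
        rstar (summ Wr) y₁ y₂ ∧ Wr (.inr y₂) (.inl u₁) ∧ rstar (resl Wr) u₁ u₂
  | .inr y => ∃ y₂ u₁, rstar (summ Wr) y y₂ ∧ Wr (.inr y₂) (.inl u₁) ∧ rstar (resl Wr) u₁ u₂

theorem collapse_to_inl {Wr : Rel' (σ ⊕ τ) (σ ⊕ τ)} {x : σ ⊕ τ} {u₂ : σ}
    (h : rstar Wr x (.inl u₂)) : cGoalL Wr u₂ x := by
  induction h using Relation.ReflTransGen.head_induction_on with
  | refl => exact Or.inl Relation.ReflTransGen.refl
  | head hstep htail ih =>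
    rename_i x' x''
    cases x' with
    | inl u =>
      cases x'' with
      | inl v =>
        rcases ih with h1 | ⟨v', y₁, y₂, u₁, h1, h2, h3, h4, h5⟩
        · exact Or.inl (Relation.ReflTransGen.head hstep h1)
        · exact Or.inr ⟨v', y₁, y₂, u₁, Relation.ReflTransGen.head hstep h1, h2, h3, h4, h5⟩
      | inr y =>
        obtain ⟨y₂, u₁, h1, h2, h3⟩ := ih
        exact Or.inr ⟨u, y, y₂, u₁, Relation.ReflTransGen.refl, hstep, h1, h2, h3⟩
    | inr y =>
      cases x'' with
      | inl u =>
        rcases ih with h1 | ⟨v, y₁, y₂, u₁, h1, h2, h3, h4, h5⟩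
        · exact ⟨y, u, Relation.ReflTransGen.refl, hstep, h1⟩
        · exact ⟨y₂, u₁, Relation.ReflTransGen.head (Or.inr ⟨u, v, hstep, h1, h2⟩) h3, h4, h5⟩
      | inr y' =>
        obtain ⟨y₂, u₁, h1, h2, h3⟩ := ih
        exact ⟨y₂, u₁, Relation.ReflTransGen.head (Or.inl hstep) h1, h2, h3⟩

theorem collapse_rr {Wr : Rel' (σ ⊕ τ) (σ ⊕ τ)} {y y₂ : τ} :
    rstar Wr (.inr y) (.inr y₂) ↔ rstar (summ Wr) y y₂ :=
  ⟨fun h => collapse_to_inr h, summ_star_emb⟩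

theorem collapse_lr {Wr : Rel' (σ ⊕ τ) (σ ⊕ τ)} {u : σ} {y₂ : τ} :
    rstar Wr (.inl u) (.inr y₂) ↔
      ∃ v y₁, rstar (resl Wr) u v ∧ Wr (.inl v) (.inr y₁) ∧ rstar (summ Wr) y₁ y₂ :=
  ⟨fun h => collapse_to_inr h, fun ⟨v, y₁, h1, h2, h3⟩ =>
    ((resl_star_emb h1).tail h2).trans (summ_star_emb h3)⟩

theorem collapse_rl {Wr : Rel' (σ ⊕ τ) (σ ⊕ τ)} {y : τ} {u₂ : σ} :
    rstar Wr (.inr y) (.inl u₂) ↔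
      ∃ y₂ u₁, rstar (summ Wr) y y₂ ∧ Wr (.inr y₂) (.inl u₁) ∧ rstar (resl Wr) u₁ u₂ :=
  ⟨fun h => collapse_to_inl h, fun ⟨y₂, u₁, h1, h2, h3⟩ =>
    ((summ_star_emb h1).tail h2).trans (resl_star_emb h3)⟩

theorem collapse_ll {Wr : Rel' (σ ⊕ τ) (σ ⊕ τ)} {u u₂ : σ} :
    rstar Wr (.inl u) (.inl u₂) ↔
      (rstar (resl Wr) u u₂ ∨
        ∃ v y₁ y₂ u₁, rstar (resl Wr) u v ∧ Wr (.inl v) (.inr y₁) ∧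
          rstar (summ Wr) y₁ y₂ ∧ Wr (.inr y₂) (.inl u₁) ∧ rstar (resl Wr) u₁ u₂) := by
  constructor
  · exact fun h => collapse_to_inl h
  · rintro (h1 | ⟨v, y₁, y₂, u₁, h1, h2, h3, h4, h5⟩)
    · exact resl_star_emb h1
    · exact (((((resl_star_emb h1).tail h2).trans (summ_star_emb h3)).tail h4).trans
        (resl_star_emb h5))

end Collapse

section Slide

variable {α β : Type}

theorem slide_fwd {p : Rel' α β} {q : Rel' β α} {b b₂ : β}
    (h : rstar (rcomp p q) b b₂) : ∀ a, q b₂ a → ∃ a₀, q b a₀ ∧ rstar (rcomp q p) a₀ a := by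
  induction h using Relation.ReflTransGen.head_induction_on with
  | refl => exact fun a hq => ⟨a, hq, Relation.ReflTransGen.refl⟩
  | head hstep htail ih =>
    intro a hq
    obtain ⟨a₁, hq1, hp1⟩ := hstep
    obtain ⟨a₀', hq', hs⟩ := ih a hq
    exact ⟨a₁, hq1, Relation.ReflTransGen.head ⟨_, hp1, hq'⟩ hs⟩

theorem slide_bwd {p : Rel' α β} {q : Rel' β α} {a₀ a : α}
    (h : rstar (rcomp q p) a₀ a) : ∀ b, q b a₀ → ∃ b₂, rstar (rcomp p q) b b₂ ∧ q b₂ a := by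
  induction h using Relation.ReflTransGen.head_induction_on with
  | refl => exact fun b hq => ⟨b, Relation.ReflTransGen.refl, hq⟩
  | head hstep htail ih =>
    intro b hq
    obtain ⟨b₁, hp1, hq1⟩ := hstep
    obtain ⟨b₂, hs, hq'⟩ := ih b₁ hq1
    exact ⟨b₂, Relation.ReflTransGen.head ⟨_, hq, hp1⟩ hs, hq'⟩

theorem slide {p : Rel' α β} {q : Rel' β α} {b : β} {a : α} :
    (∃ b₂, rstar (rcomp p q) b b₂ ∧ q b₂ a) ↔ ∃ a₀, q b a₀ ∧ rstar (rcomp q p) a₀ a :=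
  ⟨fun ⟨b₂, hs, hq⟩ => slide_fwd hs a hq, fun ⟨a₀, hq, hs⟩ => slide_bwd hs b hq⟩

end Slide
section AssocSetup

variable {Ap Am Bp Bm Cp Cm Dp Dm : Type}
variable (R : Rel' (Ap ⊕ Bm) (Bp ⊕ Am)) (S : Rel' (Bp ⊕ Cm) (Cp ⊕ Bm))
  (T : Rel' (Cp ⊕ Dm) (Dp ⊕ Cm))

/-- The global interaction graph on the middle interfaces. -/
def bigW : Rel' ((Bp ⊕ Bm) ⊕ (Cp ⊕ Cm)) ((Bp ⊕ Bm) ⊕ (Cp ⊕ Cm)) :=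
  fun x y => match x, y with
  | .inl (.inl b), .inl (.inr b') => c11 S b b'
  | .inl (.inl b), .inr (.inl c) => c12 S b c
  | .inl (.inr b'), .inl (.inl b) => c22 R b' b
  | .inr (.inl c), .inr (.inr c') => c11 T c c'
  | .inr (.inr c'), .inr (.inl c) => c22 S c' c
  | .inr (.inr c'), .inl (.inr b') => c21 S c' b'
  | _, _ => False

theorem resl_bigW_eq : ∀ x y, resl (bigW R S T) x y ↔ zig (c11 S) (c22 R) x y := by
  intro x y
  cases x <;> cases y <;> exact Iff.rfl

theorem resr_bigW_eq : ∀ x y, resr (bigW R S T) x y ↔ zig (c11 T) (c22 S) x y := by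
  intro x y
  cases x <;> cases y <;> exact Iff.rfl

theorem summ_bigW_eq :
    ∀ y y₂, summ (bigW R S T) y y₂ ↔ zig (c11 T) (c22 (IntComp S R)) y y₂ := by
  rintro (c | c') (c₂ | c'₂)
  · constructor
    · rintro (h | ⟨u, v, h1, h2, h3⟩)
      · exact h.elim
      · cases u <;> exact h1.elim
    · exact fun h => h.elim
  · constructor
    · rintro (h | ⟨u, v, h1, h2, h3⟩)
      · exact h
      · cases u <;> exact h1.elim
    · exact fun h => Or.inl h
  · -- summ (inr c') (inl c₂) ↔ c22 (IntComp S R) c' c₂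
    constructor
    · rintro (h | ⟨u, v, h1, h2, h3⟩)
      · exact Or.inl h
      · rcases u with b | m₀
        · exact h1.elim
        · rcases v with b | m
          · -- h2 : rstar (resl W) (.inr m₀) (.inl b), h3 : c12 S b c₂
            have h2' : rstar (zig (c11 S) (c22 R)) (.inr m₀) (.inl b) :=
              (rstar_congr (resl_bigW_eq R S T)).1 h2
            obtain ⟨m, hs, hr⟩ := zig_rl'.1 h2'
            exact Or.inr ⟨b, ⟨m, ⟨m₀, h1, hs⟩, hr⟩, h3⟩
          · exact h3.elim
    · rintro (h | ⟨b, ⟨m, ⟨m₀, h1, hs⟩, hr⟩, h3⟩)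
      · exact Or.inl h
      · refine Or.inr ⟨.inr m₀, .inl b, h1, ?_, h3⟩
        exact (rstar_congr (resl_bigW_eq R S T)).2 (zig_rl'.2 ⟨m, hs, hr⟩)
  · constructor
    · rintro (h | ⟨u, v, h1, h2, h3⟩)
      · exact h.elim
      · cases v <;> exact h3.elim
    · exact fun h => h.elim

theorem summ_swap_bigW_eq :
    ∀ u u₂, summ (swapRel (bigW R S T)) u u₂ ↔ zig (c11 (IntComp T S)) (c22 R) u u₂ := by
  rintro (b | b') (b₂ | b'₂)
  · constructor
    · rintro (h | ⟨y, y₂, h1, h2, h3⟩)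
      · exact h.elim
      · cases y₂ <;> exact h3.elim
    · exact fun h => h.elim
  · -- summσ (inl b) (inr b'₂) ↔ c11 (IntComp T S) b b'₂
    constructor
    · rintro (h | ⟨y, y₂, h1, h2, h3⟩)
      · exact Or.inl h
      · rcases y with c | c'
        · rcases y₂ with c₁ | c'₁
          · exact h3.elim
          · -- h1 : c12 S b c, h2 : rstar (resl (swapRel W)) (.inl c) (.inr c'₁), h3 : c21 S c'₁ b'₂
            have h2' : rstar (zig (c11 T) (c22 S)) (.inl c) (.inr c'₁) :=
              (rstar_congr (resr_bigW_eq R S T)).1 h2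
            obtain ⟨c₂, hs, ht⟩ := zig_lr.1 h2'
            exact Or.inr ⟨c'₁, ⟨c₂, ⟨c, h1, hs⟩, ht⟩, h3⟩
        · exact h1.elim
    · rintro (h | ⟨c'₁, ⟨c₂, ⟨c, h1, hs⟩, ht⟩, h3⟩)
      · exact Or.inl h
      · refine Or.inr ⟨.inl c, .inr c'₁, h1, ?_, h3⟩
        exact (rstar_congr (resr_bigW_eq R S T)).2 (zig_lr.2 ⟨c₂, hs, ht⟩)
  · constructor
    · rintro (h | ⟨y, y₂, h1, h2, h3⟩)
      · exact h
      · cases y <;> exact h1.elim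
    · exact fun h => Or.inl h
  · constructor
    · rintro (h | ⟨y, y₂, h1, h2, h3⟩)
      · exact h.elim
      · cases y <;> exact h1.elim
    · exact fun h => h.elim

end AssocSetup
section AssocHelpers

variable {Ap Am Bp Bm Cp Cm Dp Dm : Type}
variable (R : Rel' (Ap ⊕ Bm) (Bp ⊕ Am)) (S : Rel' (Bp ⊕ Cm) (Cp ⊕ Bm))
  (T : Rel' (Cp ⊕ Dm) (Dp ⊕ Cm))

/-! Collapse lemmas with the left summand summarized, obtained by swapping. -/

theorem collapse_ll' {σ τ : Type} {Wr : Rel' (σ ⊕ τ) (σ ⊕ τ)} {u u₂ : σ} :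
    rstar Wr (.inl u) (.inl u₂) ↔ rstar (summ (swapRel Wr)) u u₂ :=
  (rstar_swapRel (x := .inr u) (y := .inr u₂)).symm.trans collapse_rr

theorem collapse_lr' {σ τ : Type} {Wr : Rel' (σ ⊕ τ) (σ ⊕ τ)} {u : σ} {y₂ : τ} :
    rstar Wr (.inl u) (.inr y₂) ↔
      ∃ u₃ y₁, rstar (summ (swapRel Wr)) u u₃ ∧ Wr (.inl u₃) (.inr y₁) ∧
        rstar (resr Wr) y₁ y₂ :=
  (rstar_swapRel (x := .inr u) (y := .inl y₂)).symm.trans collapse_rl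

theorem collapse_rl' {σ τ : Type} {Wr : Rel' (σ ⊕ τ) (σ ⊕ τ)} {y : τ} {u₂ : σ} :
    rstar Wr (.inr y) (.inl u₂) ↔
      ∃ y₃ u₁, rstar (resr Wr) y y₃ ∧ Wr (.inr y₃) (.inl u₁) ∧
        rstar (summ (swapRel Wr)) u₁ u₂ :=
  (rstar_swapRel (x := .inl y) (y := .inr u₂)).symm.trans collapse_lr

theorem collapse_rr' {σ τ : Type} {Wr : Rel' (σ ⊕ τ) (σ ⊕ τ)} {y y₂ : τ} :
    rstar Wr (.inr y) (.inr y₂) ↔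
      (rstar (resr Wr) y y₂ ∨
        ∃ y₃ u u₂ y₁, rstar (resr Wr) y y₃ ∧ Wr (.inr y₃) (.inl u) ∧
          rstar (summ (swapRel Wr)) u u₂ ∧ Wr (.inl u₂) (.inr y₁) ∧
          rstar (resr Wr) y₁ y₂) :=
  (rstar_swapRel (x := .inl y) (y := .inl y₂)).symm.trans collapse_ll

/-! Bridges between loop-star formulas and star of restricted/summary relations. -/

theorem hA1 : ∀ b b₂, rstar (rcomp (c22 R) (c11 S)) b b₂ ↔
    rstar (resl (bigW R S T)) (.inl b) (.inl b₂) := fun _ _ =>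
  zig_ll.symm.trans (rstar_congr (resl_bigW_eq R S T)).symm

theorem hA2 : ∀ b b', (∃ b₂, rstar (rcomp (c22 R) (c11 S)) b b₂ ∧ c11 S b₂ b') ↔
    rstar (resl (bigW R S T)) (.inl b) (.inr b') := fun _ _ =>
  zig_lr.symm.trans (rstar_congr (resl_bigW_eq R S T)).symm

theorem hA3 : ∀ m b, (∃ m₁, rstar (rcomp (c11 S) (c22 R)) m m₁ ∧ c22 R m₁ b) ↔
    rstar (resl (bigW R S T)) (.inr m) (.inl b) := fun _ _ =>
  zig_rl'.symm.trans (rstar_congr (resl_bigW_eq R S T)).symm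

theorem hA4 : ∀ m m₁, rstar (rcomp (c11 S) (c22 R)) m m₁ ↔
    rstar (resl (bigW R S T)) (.inr m) (.inr m₁) := fun _ _ =>
  zig_rr.symm.trans (rstar_congr (resl_bigW_eq R S T)).symm

theorem hB1 : ∀ c c₂, rstar (rcomp (c22 S) (c11 T)) c c₂ ↔
    rstar (resr (bigW R S T)) (.inl c) (.inl c₂) := fun _ _ =>
  zig_ll.symm.trans (rstar_congr (resr_bigW_eq R S T)).symm

theorem hB2 : ∀ c c', (∃ c₂, rstar (rcomp (c22 S) (c11 T)) c c₂ ∧ c11 T c₂ c') ↔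
    rstar (resr (bigW R S T)) (.inl c) (.inr c') := fun _ _ =>
  zig_lr.symm.trans (rstar_congr (resr_bigW_eq R S T)).symm

theorem hB3 : ∀ c' c, (∃ c₁, rstar (rcomp (c11 T) (c22 S)) c' c₁ ∧ c22 S c₁ c) ↔
    rstar (resr (bigW R S T)) (.inr c') (.inl c) := fun _ _ =>
  zig_rl'.symm.trans (rstar_congr (resr_bigW_eq R S T)).symm

theorem hB4 : ∀ c' c₁, rstar (rcomp (c11 T) (c22 S)) c' c₁ ↔
    rstar (resr (bigW R S T)) (.inr c') (.inr c₁) := fun _ _ =>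
  zig_rr.symm.trans (rstar_congr (resr_bigW_eq R S T)).symm

theorem hC1 : ∀ c c₂, rstar (rcomp (c22 (IntComp S R)) (c11 T)) c c₂ ↔
    rstar (summ (bigW R S T)) (.inl c) (.inl c₂) := fun _ _ =>
  zig_ll.symm.trans (rstar_congr (summ_bigW_eq R S T)).symm

theorem hC2 : ∀ c c', (∃ c₂, rstar (rcomp (c22 (IntComp S R)) (c11 T)) c c₂ ∧ c11 T c₂ c') ↔
    rstar (summ (bigW R S T)) (.inl c) (.inr c') := fun _ _ =>
  zig_lr.symm.trans (rstar_congr (summ_bigW_eq R S T)).symm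

theorem hC3 : ∀ c' c, (∃ c₁, rstar (rcomp (c11 T) (c22 (IntComp S R))) c' c₁ ∧
      c22 (IntComp S R) c₁ c) ↔
    rstar (summ (bigW R S T)) (.inr c') (.inl c) := fun _ _ =>
  zig_rl'.symm.trans (rstar_congr (summ_bigW_eq R S T)).symm

theorem hC4 : ∀ c' c₁, rstar (rcomp (c11 T) (c22 (IntComp S R))) c' c₁ ↔
    rstar (summ (bigW R S T)) (.inr c') (.inr c₁) := fun _ _ =>
  zig_rr.symm.trans (rstar_congr (summ_bigW_eq R S T)).symm

theorem hD1 : ∀ b b₂, rstar (rcomp (c22 R) (c11 (IntComp T S))) b b₂ ↔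
    rstar (summ (swapRel (bigW R S T))) (.inl b) (.inl b₂) := fun _ _ =>
  zig_ll.symm.trans (rstar_congr (summ_swap_bigW_eq R S T)).symm

theorem hD2 : ∀ b b', (∃ b₂, rstar (rcomp (c22 R) (c11 (IntComp T S))) b b₂ ∧
      c11 (IntComp T S) b₂ b') ↔
    rstar (summ (swapRel (bigW R S T))) (.inl b) (.inr b') := fun _ _ =>
  zig_lr.symm.trans (rstar_congr (summ_swap_bigW_eq R S T)).symm

theorem hD3 : ∀ m b, (∃ m₁, rstar (rcomp (c11 (IntComp T S)) (c22 R)) m m₁ ∧ c22 R m₁ b) ↔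
    rstar (summ (swapRel (bigW R S T))) (.inr m) (.inl b) := fun _ _ =>
  zig_rl'.symm.trans (rstar_congr (summ_swap_bigW_eq R S T)).symm

theorem hD4 : ∀ m m₁, rstar (rcomp (c11 (IntComp T S)) (c22 R)) m m₁ ↔
    rstar (summ (swapRel (bigW R S T))) (.inr m) (.inr m₁) := fun _ _ =>
  zig_rr.symm.trans (rstar_congr (summ_swap_bigW_eq R S T)).symm

end AssocHelpers
section AssocFold

variable {Ap Am Bp Bm Cp Cm Dp Dm : Type}
variable (R : Rel' (Ap ⊕ Bm) (Bp ⊕ Am)) (S : Rel' (Bp ⊕ Cm) (Cp ⊕ Bm))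
  (T : Rel' (Cp ⊕ Dm) (Dp ⊕ Cm))

theorem F1t : ∀ (b : Bp) (c : Cp), rstar (bigW R S T) (.inl (.inl b)) (.inr (.inl c)) ↔
    ∃ b₂ c₁, rstar (rcomp (c22 R) (c11 S)) b b₂ ∧ c12 S b₂ c₁ ∧
      rstar (rcomp (c22 (IntComp S R)) (c11 T)) c₁ c := by
  intro b c
  rw [collapse_lr]
  constructor
  · rintro ⟨v, y₁, h1, h2, h3⟩
    rcases v with b₂ | m
    · rcases y₁ with c₁ | c'
      · exact ⟨b₂, c₁, (hA1 R S T b b₂).2 h1, h2, (hC1 R S T c₁ c).2 h3⟩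
      · exact h2.elim
    · rcases y₁ with c₁ | c' <;> exact h2.elim
  · rintro ⟨b₂, c₁, h1, h2, h3⟩
    exact ⟨.inl b₂, .inl c₁, (hA1 R S T b b₂).1 h1, h2, (hC1 R S T c₁ c).1 h3⟩

theorem F1s : ∀ (b : Bp) (c : Cp), rstar (bigW R S T) (.inl (.inl b)) (.inr (.inl c)) ↔
    ∃ b₂ c₁, rstar (rcomp (c22 R) (c11 (IntComp T S))) b b₂ ∧ c12 S b₂ c₁ ∧
      rstar (rcomp (c22 S) (c11 T)) c₁ c := by
  intro b c
  rw [collapse_lr']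
  constructor
  · rintro ⟨v, y₁, h1, h2, h3⟩
    rcases v with b₂ | m
    · rcases y₁ with c₁ | c'
      · exact ⟨b₂, c₁, (hD1 R S T b b₂).2 h1, h2, (hB1 R S T c₁ c).2 h3⟩
      · exact h2.elim
    · rcases y₁ with c₁ | c' <;> exact h2.elim
  · rintro ⟨b₂, c₁, h1, h2, h3⟩
    exact ⟨.inl b₂, .inl c₁, (hD1 R S T b b₂).1 h1, h2, (hB1 R S T c₁ c).1 h3⟩

theorem F2t : ∀ (b : Bp) (b' : Bm), rstar (bigW R S T) (.inl (.inl b)) (.inl (.inr b')) ↔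
    ((∃ b₂, rstar (rcomp (c22 R) (c11 S)) b b₂ ∧ c11 S b₂ b') ∨
      ∃ b₂ c₁ c₂ c' m, rstar (rcomp (c22 R) (c11 S)) b b₂ ∧ c12 S b₂ c₁ ∧
        rstar (rcomp (c22 (IntComp S R)) (c11 T)) c₁ c₂ ∧ c11 T c₂ c' ∧
        c21 S c' m ∧ rstar (rcomp (c11 S) (c22 R)) m b') := by
  intro b b'
  rw [collapse_ll]
  constructor
  · rintro (h | ⟨v, y₁, y₂, u₁, h1, h2, h3, h4, h5⟩)
    · exact Or.inl ((hA2 R S T b b').2 h)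
    · rcases v with b₂ | m
      · rcases y₁ with c₁ | c'
        · rcases y₂ with c₂ | c'
          · exact h4.elim
          · rcases u₁ with b₃ | m
            · exact h4.elim
            · obtain ⟨c₂, hs, ht⟩ := (hC2 R S T c₁ c').2 h3
              exact Or.inr ⟨b₂, c₁, c₂, c', m, (hA1 R S T b b₂).2 h1, h2, hs, ht, h4,
                (hA4 R S T m b').2 h5⟩
        · exact h2.elim
      · rcases y₁ with c₁ | c' <;> exact h2.elim
  · rintro (h | ⟨b₂, c₁, c₂, c', m, h1, h2, h3, h4, h5, h6⟩)
    · exact Or.inl ((hA2 R S T b b').1 h)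
    · exact Or.inr ⟨.inl b₂, .inl c₁, .inr c', .inr m, (hA1 R S T b b₂).1 h1, h2,
        (hC2 R S T c₁ c').1 ⟨c₂, h3, h4⟩, h5, (hA4 R S T m b').1 h6⟩

theorem F2s : ∀ (b : Bp) (b' : Bm), rstar (bigW R S T) (.inl (.inl b)) (.inl (.inr b')) ↔
    ∃ b₂, rstar (rcomp (c22 R) (c11 (IntComp T S))) b b₂ ∧ c11 (IntComp T S) b₂ b' := by
  intro b b'
  rw [collapse_ll']
  exact ((rstar_congr (summ_swap_bigW_eq R S T)).trans zig_lr)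

theorem F3t : ∀ (c' : Cm) (c : Cp), rstar (bigW R S T) (.inr (.inr c')) (.inr (.inl c)) ↔
    ∃ c₁, rstar (rcomp (c11 T) (c22 (IntComp S R))) c' c₁ ∧ c22 (IntComp S R) c₁ c := by
  intro c' c
  rw [collapse_rr]
  exact ((rstar_congr (summ_bigW_eq R S T)).trans zig_rl')

theorem F3s : ∀ (c' : Cm) (c : Cp), rstar (bigW R S T) (.inr (.inr c')) (.inr (.inl c)) ↔
    ((∃ c₁, rstar (rcomp (c11 T) (c22 S)) c' c₁ ∧ c22 S c₁ c) ∨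
      ∃ c'₁ m m₁ b c₁, rstar (rcomp (c11 T) (c22 S)) c' c'₁ ∧ c21 S c'₁ m ∧
        rstar (rcomp (c11 (IntComp T S)) (c22 R)) m m₁ ∧ c22 R m₁ b ∧
        c12 S b c₁ ∧ rstar (rcomp (c22 S) (c11 T)) c₁ c) := by
  intro c' c
  rw [collapse_rr']
  constructor
  · rintro (h | ⟨y₃, u, u₂, y₁, h1, h2, h3, h4, h5⟩)
    · exact Or.inl ((hB3 R S T c' c).2 h)
    · rcases y₃ with c₁ | c'₁
      · exact h2.elim
      · rcases u with b | m
        · exact h2.elim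
        · rcases u₂ with b | m₁'
          · rcases y₁ with c₁ | c''
            · obtain ⟨m₁, hs, hr⟩ := (hD3 R S T m b).2 h3
              exact Or.inr ⟨c'₁, m, m₁, b, c₁, (hB4 R S T c' c'₁).2 h1, h2, hs, hr, h4,
                (hB1 R S T c₁ c).2 h5⟩
            · exact h4.elim
          · rcases y₁ with c₁ | c'' <;> exact h4.elim
  · rintro (h | ⟨c'₁, m, m₁, b, c₁, h1, h2, h3, h4, h5, h6⟩)
    · exact Or.inl ((hB3 R S T c' c).1 h)
    · exact Or.inr ⟨.inr c'₁, .inr m, .inl b, .inl c₁, (hB4 R S T c' c'₁).1 h1, h2,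
        (hD3 R S T m b).1 ⟨m₁, h3, h4⟩, h5, (hB1 R S T c₁ c).1 h6⟩

theorem F4t : ∀ (c' : Cm) (b' : Bm), rstar (bigW R S T) (.inr (.inr c')) (.inl (.inr b')) ↔
    ∃ c'₁ m, rstar (rcomp (c11 T) (c22 (IntComp S R))) c' c'₁ ∧ c21 S c'₁ m ∧
      rstar (rcomp (c11 S) (c22 R)) m b' := by
  intro c' b'
  rw [collapse_rl]
  constructor
  · rintro ⟨y₂, u₁, h1, h2, h3⟩
    rcases y₂ with c₁ | c'₁
    · exact h2.elim
    · rcases u₁ with b | m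
      · exact h2.elim
      · exact ⟨c'₁, m, (hC4 R S T c' c'₁).2 h1, h2, (hA4 R S T m b').2 h3⟩
  · rintro ⟨c'₁, m, h1, h2, h3⟩
    exact ⟨.inr c'₁, .inr m, (hC4 R S T c' c'₁).1 h1, h2, (hA4 R S T m b').1 h3⟩

theorem F4s : ∀ (c' : Cm) (b' : Bm), rstar (bigW R S T) (.inr (.inr c')) (.inl (.inr b')) ↔
    ∃ c'₁ m, rstar (rcomp (c11 T) (c22 S)) c' c'₁ ∧ c21 S c'₁ m ∧
      rstar (rcomp (c11 (IntComp T S)) (c22 R)) m b' := by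
  intro c' b'
  rw [collapse_rl']
  constructor
  · rintro ⟨y₃, u₁, h1, h2, h3⟩
    rcases y₃ with c₁ | c'₁
    · exact h2.elim
    · rcases u₁ with b | m
      · exact h2.elim
      · exact ⟨c'₁, m, (hB4 R S T c' c'₁).2 h1, h2, (hD4 R S T m b').2 h3⟩
  · rintro ⟨c'₁, m, h1, h2, h3⟩
    exact ⟨.inr c'₁, .inr m, (hB4 R S T c' c'₁).1 h1, h2, (hD4 R S T m b').1 h3⟩

end AssocFold
section AssocComponents

variable {Ap Am Bp Bm Cp Cm Dp Dm : Type}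
variable (R : Rel' (Ap ⊕ Bm) (Bp ⊕ Am)) (S : Rel' (Bp ⊕ Cm) (Cp ⊕ Bm))
  (T : Rel' (Cp ⊕ Dm) (Dp ⊕ Cm))

theorem P12eq : ∀ (a : Ap) (c : Cp), c12 (IntComp S R) a c ↔
    rcomp (c12 S) (rcomp (rstar (rcomp (c22 R) (c11 S))) (c12 R)) a c := fun _ _ => Iff.rfl

theorem P11eq : ∀ (a : Ap) (a' : Am), c11 (IntComp S R) a a' ↔
    (c11 R a a' ∨
      rcomp (c21 R) (rcomp (c11 S) (rcomp (rstar (rcomp (c22 R) (c11 S))) (c12 R))) a a') :=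
  fun _ _ => Iff.rfl

theorem P21eq : ∀ (c' : Cm) (a' : Am), c21 (IntComp S R) c' a' ↔
    rcomp (c21 R) (rcomp (rstar (rcomp (c11 S) (c22 R))) (c21 S)) c' a' := fun _ _ => Iff.rfl

theorem P22eq : ∀ (c' : Cm) (c : Cp), c22 (IntComp S R) c' c ↔
    (c22 S c' c ∨
      rcomp (c12 S) (rcomp (c22 R) (rcomp (rstar (rcomp (c11 S) (c22 R))) (c21 S))) c' c) :=
  fun _ _ => Iff.rfl

theorem Q12eq : ∀ (b : Bp) (d : Dp), c12 (IntComp T S) b d ↔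
    rcomp (c12 T) (rcomp (rstar (rcomp (c22 S) (c11 T))) (c12 S)) b d := fun _ _ => Iff.rfl

theorem Q11eq : ∀ (b : Bp) (b' : Bm), c11 (IntComp T S) b b' ↔
    (c11 S b b' ∨
      rcomp (c21 S) (rcomp (c11 T) (rcomp (rstar (rcomp (c22 S) (c11 T))) (c12 S))) b b') :=
  fun _ _ => Iff.rfl

theorem Q21eq : ∀ (d' : Dm) (b' : Bm), c21 (IntComp T S) d' b' ↔
    rcomp (c21 S) (rcomp (rstar (rcomp (c11 T) (c22 S))) (c21 T)) d' b' := fun _ _ => Iff.rfl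

theorem Q22eq : ∀ (d' : Dm) (d : Dp), c22 (IntComp T S) d' d ↔
    (c22 T d' d ∨
      rcomp (c12 T) (rcomp (c22 S) (rcomp (rstar (rcomp (c11 T) (c22 S))) (c21 T))) d' d) :=
  fun _ _ => Iff.rfl

theorem lhs_pp (a : Ap) (d : Dp) :
    rcomp (c12 T) (rcomp (rstar (rcomp (c22 (IntComp S R)) (c11 T)))
      (c12 (IntComp S R))) a d ↔
    ∃ b c, c12 R a b ∧ rstar (bigW R S T) (.inl (.inl b)) (.inr (.inl c)) ∧ c12 T c d := by
  simp only [F1t, P12eq, rcomp]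
  tauto

theorem rhs_pp (a : Ap) (d : Dp) :
    rcomp (c12 (IntComp T S)) (rcomp (rstar (rcomp (c22 R) (c11 (IntComp T S))))
      (c12 R)) a d ↔
    ∃ b c, c12 R a b ∧ rstar (bigW R S T) (.inl (.inl b)) (.inr (.inl c)) ∧ c12 T c d := by
  simp only [F1s, Q12eq, rcomp]
  tauto

end AssocComponents
section AssocComponents2

variable {Ap Am Bp Bm Cp Cm Dp Dm : Type}
variable (R : Rel' (Ap ⊕ Bm) (Bp ⊕ Am)) (S : Rel' (Bp ⊕ Cm) (Cp ⊕ Bm))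
  (T : Rel' (Cp ⊕ Dm) (Dp ⊕ Cm))

theorem lhs_pm (a : Ap) (a' : Am) :
    (c11 (IntComp S R) a a' ∨
      rcomp (c21 (IntComp S R)) (rcomp (c11 T)
        (rcomp (rstar (rcomp (c22 (IntComp S R)) (c11 T))) (c12 (IntComp S R)))) a a') ↔
    (c11 R a a' ∨ ∃ b b', c12 R a b ∧
      rstar (bigW R S T) (.inl (.inl b)) (.inl (.inr b')) ∧ c21 R b' a') := by
  simp only [P11eq, P21eq, P12eq, rcomp]
  constructor
  · rintro (h | hbig)
    · rcases h with h | ⟨b', ⟨b₂, ⟨b, h1, h2⟩, h3⟩, h4⟩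
      · exact Or.inl h
      · exact Or.inr ⟨b, b', h1, (F2t R S T b b').2 (Or.inl ⟨b₂, h2, h3⟩), h4⟩
    · obtain ⟨c', ⟨c₂, ⟨c₁, ⟨b₂, ⟨b, h1, h2⟩, h3⟩, h4⟩, h5⟩, ⟨b', ⟨m, h6, h7⟩, h8⟩⟩ := hbig
      exact Or.inr ⟨b, b', h1,
        (F2t R S T b b').2 (Or.inr ⟨b₂, c₁, c₂, c', m, h2, h3, h4, h5, h6, h7⟩), h8⟩
  · rintro (h | ⟨b, b', h1, h2, h3⟩)
    · exact Or.inl (Or.inl h)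
    · rcases (F2t R S T b b').1 h2 with ⟨b₂, h4, h5⟩ |
        ⟨b₂, c₁, c₂, c', m, h4, h5, h6, h7, h8, h9⟩
      · exact Or.inl (Or.inr ⟨b', ⟨b₂, ⟨b, h1, h4⟩, h5⟩, h3⟩)
      · exact Or.inr ⟨c', ⟨c₂, ⟨c₁, ⟨b₂, ⟨b, h1, h4⟩, h5⟩, h6⟩, h7⟩, ⟨b', ⟨m, h8, h9⟩, h3⟩⟩

theorem rhs_pm (a : Ap) (a' : Am) :
    (c11 R a a' ∨
      rcomp (c21 R) (rcomp (c11 (IntComp T S))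
        (rcomp (rstar (rcomp (c22 R) (c11 (IntComp T S)))) (c12 R))) a a') ↔
    (c11 R a a' ∨ ∃ b b', c12 R a b ∧
      rstar (bigW R S T) (.inl (.inl b)) (.inl (.inr b')) ∧ c21 R b' a') := by
  simp only [F2s, rcomp]
  tauto

theorem lhs_mp (d' : Dm) (d : Dp) :
    (c22 T d' d ∨
      rcomp (c12 T) (rcomp (c22 (IntComp S R))
        (rcomp (rstar (rcomp (c11 T) (c22 (IntComp S R)))) (c21 T))) d' d) ↔
    (c22 T d' d ∨ ∃ c' c, c21 T d' c' ∧
      rstar (bigW R S T) (.inr (.inr c')) (.inr (.inl c)) ∧ c12 T c d) := by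
  simp only [F3t, rcomp]
  tauto

theorem rhs_mp (d' : Dm) (d : Dp) :
    (c22 (IntComp T S) d' d ∨
      rcomp (c12 (IntComp T S)) (rcomp (c22 R)
        (rcomp (rstar (rcomp (c11 (IntComp T S)) (c22 R))) (c21 (IntComp T S)))) d' d) ↔
    (c22 T d' d ∨ ∃ c' c, c21 T d' c' ∧
      rstar (bigW R S T) (.inr (.inr c')) (.inr (.inl c)) ∧ c12 T c d) := by
  simp only [Q22eq, Q12eq, Q21eq, rcomp]
  constructor
  · rintro (h | hbig)
    · rcases h with h | ⟨c, ⟨c₁, ⟨c'₀, h1, h2⟩, h3⟩, h4⟩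
      · exact Or.inl h
      · exact Or.inr ⟨c'₀, c, h1, (F3s R S T c'₀ c).2 (Or.inl ⟨c₁, h2, h3⟩), h4⟩
    · obtain ⟨b, ⟨m₁, ⟨m₀, ⟨c'₁, ⟨c'₀, h1, h2⟩, h3⟩, h4⟩, h5⟩, ⟨c₂, ⟨c₁, h6, h7⟩, h8⟩⟩ := hbig
      exact Or.inr ⟨c'₀, c₂, h1,
        (F3s R S T c'₀ c₂).2 (Or.inr ⟨c'₁, m₀, m₁, b, c₁, h2, h3, h4, h5, h6, h7⟩), h8⟩
  · rintro (h | ⟨c', c, h1, h2, h3⟩)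
    · exact Or.inl (Or.inl h)
    · rcases (F3s R S T c' c).1 h2 with ⟨c₁, h4, h5⟩ |
        ⟨c'₁, m, m₁, b, c₁, h4, h5, h6, h7, h8, h9⟩
      · exact Or.inl (Or.inr ⟨c, ⟨c₁, ⟨c', h1, h4⟩, h5⟩, h3⟩)
      · exact Or.inr ⟨b, ⟨m₁, ⟨m, ⟨c'₁, ⟨c', h1, h4⟩, h5⟩, h6⟩, h7⟩, ⟨c, ⟨c₁, h8, h9⟩, h3⟩⟩

theorem lhs_mm (d' : Dm) (a' : Am) :
    rcomp (c21 (IntComp S R)) (rcomp (rstar (rcomp (c11 T) (c22 (IntComp S R))))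
      (c21 T)) d' a' ↔
    ∃ c' b', c21 T d' c' ∧
      rstar (bigW R S T) (.inr (.inr c')) (.inl (.inr b')) ∧ c21 R b' a' := by
  simp only [F4t, P21eq, rcomp]
  tauto

theorem rhs_mm (d' : Dm) (a' : Am) :
    rcomp (c21 R) (rcomp (rstar (rcomp (c11 (IntComp T S)) (c22 R)))
      (c21 (IntComp T S))) d' a' ↔
    ∃ c' b', c21 T d' c' ∧
      rstar (bigW R S T) (.inr (.inr c')) (.inl (.inr b')) ∧ c21 R b' a' := by
  simp only [F4s, Q21eq, rcomp]
  tauto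

end AssocComponents2
/-- Associativity of Int(Rel) composition. -/
theorem intComp_assoc (Ap Am Bp Bm Cp Cm Dp Dm : Type)
    (R : Rel' (Ap ⊕ Bm) (Bp ⊕ Am)) (S : Rel' (Bp ⊕ Cm) (Cp ⊕ Bm))
    (T : Rel' (Cp ⊕ Dm) (Dp ⊕ Cm)) :
    IntComp T (IntComp S R) = IntComp (IntComp T S) R := by
  funext x y
  apply propext
  cases x with
  | inl a =>
    cases y with
    | inl d => exact (lhs_pp R S T a d).trans (rhs_pp R S T a d).symm
    | inr a' => exact (lhs_pm R S T a a').trans (rhs_pm R S T a a').symm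
  | inr d' =>
    cases y with
    | inl d => exact (lhs_mp R S T d' d).trans (rhs_mp R S T d' d).symm
    | inr a' => exact (lhs_mm R S T d' a').trans (rhs_mm R S T d' a').symm

end IntRel
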